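/- arXiv:1210.1952 — 3 statements merged into one kernel-verified Lean document; each statement's English description precedes it below -/
import Mathlib

section
/- The function f : ℝ → ℝ defined by f(y) = Σ_{k=0}^∞ 2^{−k}‖2^{k²}y‖, where ‖t‖ = dist(t, ℤ), is continuous and has no M-points; consequently f is nowhere differentiable. -/
noncomputable def mpfG (t : ℝ) : ℝ := |t - round t|

lemma mpfG_nonneg (t : ℝ) : 0 ≤ mpfG t := abs_nonneg _

lemma mpfG_le_half (t : ℝ) : mpfG t ≤ 1/2 := abs_sub_round t

lemma mpfG_le_int (t : ℝ) (m : ℤ) : mpfG t ≤ |t - m| := by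
  rw [mpfG, abs_sub_round_eq_min]
  have h1 : (0:ℝ) ≤ Int.fract t := Int.fract_nonneg t
  have h2 : Int.fract t < 1 := Int.fract_lt_one t
  have ht : t - m = Int.fract t + ((⌊t⌋ - m : ℤ) : ℝ) := by
    rw [Int.fract]; push_cast; ring
  rcases le_or_gt m ⌊t⌋ with h | h
  · have : (0:ℝ) ≤ ((⌊t⌋ - m : ℤ) : ℝ) := by exact_mod_cast sub_nonneg.mpr h
    refine le_trans (min_le_left _ _) ?_
    rw [ht, abs_of_nonneg (by linarith)]; linarith
  · have : ((⌊t⌋ - m : ℤ) : ℝ) ≤ -1 := by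
      have : ⌊t⌋ - m ≤ -1 := by omega
      exact_mod_cast this
    refine le_trans (min_le_right _ _) ?_
    rw [ht, abs_of_nonpos (by linarith)]; linarith

lemma mpfG_lip (a b : ℝ) : |mpfG a - mpfG b| ≤ |a - b| := by
  have h1 : mpfG a ≤ |a - b| + mpfG b := by
    calc mpfG a ≤ |a - (round b : ℤ)| := mpfG_le_int a (round b)
    _ ≤ |a - b| + |b - (round b : ℤ)| := abs_sub_le a b _
    _ = |a - b| + mpfG b := rfl
  have h2 : mpfG b ≤ |a - b| + mpfG a := by
    calc mpfG b ≤ |b - (round a : ℤ)| := mpfG_le_int b (round a)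
    _ ≤ |b - a| + |a - (round a : ℤ)| := abs_sub_le b a _
    _ = |a - b| + mpfG a := by rw [abs_sub_comm]; rfl
  rw [abs_sub_le_iff]; constructor <;> linarith

lemma mpfG_add_int (t : ℝ) (m : ℤ) : mpfG (t + m) = mpfG t := by
  rw [mpfG, mpfG, round_add_intCast]; push_cast; ring_nf

lemma mpfG_neg (t : ℝ) : mpfG (-t) = mpfG t := by
  apply le_antisymm
  · calc mpfG (-t) ≤ |(-t) - ((-round t : ℤ) : ℝ)| := mpfG_le_int _ _
      _ = mpfG t := by rw [mpfG]; push_cast; rw [← abs_neg]; ring_nf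
  · calc mpfG t ≤ |t - ((-round (-t) : ℤ) : ℝ)| := mpfG_le_int _ _
      _ = mpfG (-t) := by rw [mpfG]; push_cast; rw [← abs_neg]; ring_nf

lemma mpfG_int (m : ℤ) : mpfG m = 0 := by
  rw [mpfG, round_intCast, sub_self, abs_zero]

lemma mpfG_half (m : ℤ) : mpfG (m + 1/2) = 1/2 := by
  have h : round ((m:ℝ) + 1/2) = m + 1 := by
    rw [round_intCast_add]
    norm_num [round_eq]
  rw [mpfG, h]
  push_cast
  rw [show (m:ℝ) + 1/2 - (m + 1) = -(1/2) by ring, abs_neg, abs_of_nonneg (by norm_num)]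

lemma mpf_exists_near (u w : ℝ) (hw : w = 0 ∨ w = 1/2) {N : ℕ} (hN : 1 ≤ N) :
    ∃ j : ℕ, 1 ≤ j ∧ j ≤ N ∧ |mpfG (u - j / N) - w| ≤ 1 / N := by
  obtain ⟨p, hp1, hp2, hgp⟩ : ∃ p : ℝ, u - 1 ≤ p ∧ p < u ∧ mpfG p = w := by
    rcases hw with rfl | rfl
    · refine ⟨((⌈u⌉ - 1 : ℤ) : ℝ), ?_, ?_, mpfG_int _⟩
      · have := Int.le_ceil u; push_cast; linarith
      · have := Int.ceil_lt_add_one u; push_cast; linarith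
    · refine ⟨((⌈u - 1/2⌉ - 1 : ℤ) : ℝ) + 1/2, ?_, ?_, mpfG_half _⟩
      · have := Int.le_ceil (u - 1/2); push_cast; linarith
      · have := Int.ceil_lt_add_one (u - 1/2); push_cast; linarith
  have hNpos : (0:ℝ) < N := by exact_mod_cast hN
  set j : ℤ := ⌈(N:ℝ) * (u - p)⌉ with hj
  have hx1 : (N:ℝ) * (u - p) ≤ j := Int.le_ceil _
  have hx2 : (j:ℝ) < (N:ℝ) * (u - p) + 1 := Int.ceil_lt_add_one _
  have hj1 : 1 ≤ j := by
    exact Int.ceil_pos.mpr (mul_pos hNpos (sub_pos.mpr hp2))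
  have hjN : j ≤ N := by
    apply Int.ceil_le.mpr
    have h1 : u - p ≤ 1 := by linarith
    calc (N:ℝ) * (u - p) ≤ (N:ℝ) * 1 := by nlinarith
    _ = ((N:ℤ):ℝ) := by push_cast; ring
  refine ⟨j.toNat, by omega, by omega, ?_⟩
  have hcast : ((j.toNat : ℕ) : ℝ) = (j : ℝ) := by
    have : (j.toNat : ℤ) = j := Int.toNat_of_nonneg (by omega)
    exact_mod_cast this
  have e1 : u - p ≤ (j:ℝ)/N := by
    rw [le_div_iff₀ hNpos]; linarith [hx1]
  have e2 : (j:ℝ)/N ≤ (u - p) + 1/N := by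
    rw [div_le_iff₀ hNpos]
    have : ((u-p) + 1/N) * N = N * (u - p) + 1 := by field_simp
    linarith
  have hdist : |(u - (j.toNat : ℝ) / N) - p| ≤ 1 / N := by
    rw [hcast, abs_le]
    have hNinv : (0:ℝ) ≤ 1/N := by positivity
    constructor <;> linarith
  calc |mpfG (u - (j.toNat:ℝ) / N) - w| = |mpfG (u - (j.toNat:ℝ) / N) - mpfG p| := by rw [hgp]
  _ ≤ |(u - (j.toNat:ℝ) / N) - p| := mpfG_lip _ _
  _ ≤ 1 / N := hdist

lemma mpf_exists_near' (u w : ℝ) (hw : w = 0 ∨ w = 1/2) {N : ℕ} (hN : 1 ≤ N) :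
    ∃ j : ℕ, 1 ≤ j ∧ j ≤ N ∧ |mpfG (u + j / N) - w| ≤ 1 / N := by
  obtain ⟨j, h1, h2, h3⟩ := mpf_exists_near (-u) w hw hN
  refine ⟨j, h1, h2, ?_⟩
  rwa [show -u - (j:ℝ)/N = -(u + j/N) by ring, mpfG_neg] at h3

lemma mpf_summable (y : ℝ) :
    Summable (fun k : ℕ => (2:ℝ)⁻¹ ^ k * mpfG (2 ^ (k^2) * y)) := by
  apply Summable.of_nonneg_of_le (fun k => mul_nonneg (by positivity) (mpfG_nonneg _)) (fun k => ?_)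
    (summable_geometric_of_lt_one (by norm_num) (by norm_num) :
      Summable fun k : ℕ => (2:ℝ)⁻¹ ^ k)
  calc (2:ℝ)⁻¹ ^ k * mpfG (2 ^ (k^2) * y) ≤ (2:ℝ)⁻¹ ^ k * 1 := by
        have := mpfG_le_half (2 ^ (k^2) * y)
        have hp : (0:ℝ) ≤ (2:ℝ)⁻¹ ^ k := by positivity
        nlinarith
  _ = (2:ℝ)⁻¹ ^ k := mul_one _

lemma mpf_sum_pow : ∀ n : ℕ, (∑ k ∈ Finset.range (n+1), 2^(k^2-k)) ≤ 2^(n^2-n+1) := by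
  intro n
  induction n with
  | zero => norm_num
  | succ m ih =>
    rcases Nat.eq_zero_or_pos m with rfl | hm
    · norm_num
    · rw [Finset.sum_range_succ]
      have h1 : m^2 - m + 1 ≤ (m+1)^2 - (m+1) := by
        obtain ⟨M, hM⟩ : ∃ M, m^2 = M := ⟨_, rfl⟩
        have hsq : (m+1)^2 = M + 2*m + 1 := by rw [← hM]; ring
        have hmm : m ≤ M := hM ▸ Nat.le_self_pow two_ne_zero m
        rw [hsq, hM]; omega
      have h2 : (2:ℕ)^(m^2-m+1) ≤ 2^((m+1)^2-(m+1)) := Nat.pow_le_pow_right (by norm_num) h1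
      have h3 : (2:ℕ)^((m+1)^2-(m+1)) + 2^((m+1)^2-(m+1)) = 2^((m+1)^2-(m+1)+1) := by ring
      calc (∑ k ∈ Finset.range (m+1), 2^(k^2-k)) + 2^((m+1)^2-(m+1))
          ≤ 2^(m^2-m+1) + 2^((m+1)^2-(m+1)) := by omega
        _ ≤ 2^((m+1)^2-(m+1)+1) := by omega

lemma mpf_key (y s : ℝ) (n : ℕ) (hn : 1 ≤ n)
    (hs : |s| ≤ ((2:ℝ)^(n^2))⁻¹)
    (hdvd : ∀ k, n < k → ∃ m : ℤ, (2:ℝ)^(k^2) * s = m) :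
    |(∑' k : ℕ, (2:ℝ)⁻¹^k * mpfG (2^(k^2) * (y + s)))
      - (∑' k : ℕ, (2:ℝ)⁻¹^k * mpfG (2^(k^2) * y))
      - (2:ℝ)⁻¹^n * (mpfG (2^(n^2) * (y+s)) - mpfG (2^(n^2) * y))|
      ≤ 8 * ((2:ℝ)⁻¹^n)^3 := by
  set D : ℕ → ℝ := fun k =>
    (2:ℝ)⁻¹^k * mpfG (2^(k^2) * (y+s)) - (2:ℝ)⁻¹^k * mpfG (2^(k^2) * y) with hD
  have hsub : (∑' k : ℕ, (2:ℝ)⁻¹^k * mpfG (2^(k^2) * (y + s)))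
      - (∑' k : ℕ, (2:ℝ)⁻¹^k * mpfG (2^(k^2) * y)) = ∑' k, D k :=
    (Summable.tsum_sub (mpf_summable _) (mpf_summable _)).symm
  have hD0 : ∀ k ∉ Finset.range (n+1), D k = 0 := by
    intro k hk
    rw [Finset.mem_range] at hk
    obtain ⟨m, hm⟩ := hdvd k (by omega)
    have he : (2:ℝ)^(k^2) * (y + s) = 2^(k^2) * y + m := by rw [← hm]; ring
    simp only [hD, he, mpfG_add_int, sub_self]
  have hts : ∑' k, D k = ∑ k ∈ Finset.range (n+1), D k := tsum_eq_sum hD0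
  have hmain : D n = (2:ℝ)⁻¹^n * (mpfG (2^(n^2)*(y+s)) - mpfG (2^(n^2)*y)) := by
    simp only [hD]; ring
  rw [hsub, hts, Finset.sum_range_succ, hmain, add_sub_cancel_right]
  have hbound : ∀ k ∈ Finset.range n, |D k| ≤ (2:ℝ)^(k^2-k) * ((2:ℝ)^(n^2))⁻¹ := by
    intro k hk
    have hlip := mpfG_lip ((2:ℝ)^(k^2)*(y+s)) ((2:ℝ)^(k^2)*y)
    have h1 : |(2:ℝ)^(k^2)*(y+s) - 2^(k^2)*y| = 2^(k^2) * |s| := by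
      rw [show (2:ℝ)^(k^2)*(y+s) - 2^(k^2)*y = 2^(k^2)*s by ring, abs_mul,
        abs_of_nonneg (by positivity : (0:ℝ) ≤ (2:ℝ)^(k^2))]
    have h2 : |D k| = (2:ℝ)⁻¹^k * |mpfG (2^(k^2)*(y+s)) - mpfG (2^(k^2)*y)| := by
      simp only [hD]
      rw [← mul_sub, abs_mul, abs_of_nonneg (by positivity : (0:ℝ) ≤ (2:ℝ)⁻¹^k)]
    have hkk : (2:ℝ)⁻¹^k * 2^(k^2) = 2^(k^2-k) := by
      rw [inv_pow, pow_sub₀ (2:ℝ) two_ne_zero (Nat.le_self_pow two_ne_zero k)]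
      ring
    have hpk : (0:ℝ) ≤ (2:ℝ)⁻¹^k := by positivity
    calc |D k| = (2:ℝ)⁻¹^k * |mpfG (2^(k^2)*(y+s)) - mpfG (2^(k^2)*y)| := h2
      _ ≤ (2:ℝ)⁻¹^k * ((2:ℝ)^(k^2) * |s|) := by rw [← h1]; exact mul_le_mul_of_nonneg_left hlip hpk
      _ = ((2:ℝ)⁻¹^k * (2:ℝ)^(k^2)) * |s| := by ring
      _ ≤ ((2:ℝ)⁻¹^k * (2:ℝ)^(k^2)) * ((2:ℝ)^(n^2))⁻¹ := by
          apply mul_le_mul_of_nonneg_left hs (by positivity)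
      _ = (2:ℝ)^(k^2-k) * ((2:ℝ)^(n^2))⁻¹ := by rw [hkk]
  obtain ⟨m, rfl⟩ : ∃ m, n = m + 1 := ⟨n - 1, by omega⟩
  have hsum2 : (∑ k ∈ Finset.range (m+1), (2:ℝ)^(k^2-k)) ≤ 2^(m^2-m+1) := by
    have := mpf_sum_pow m
    calc (∑ k ∈ Finset.range (m+1), (2:ℝ)^(k^2-k))
        = ((∑ k ∈ Finset.range (m+1), 2^(k^2-k) : ℕ) : ℝ) := by push_cast; rfl
      _ ≤ ((2^(m^2-m+1) : ℕ) : ℝ) := by exact_mod_cast this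
      _ = 2^(m^2-m+1) := by push_cast; rfl
  calc |∑ k ∈ Finset.range (m+1), D k| ≤ ∑ k ∈ Finset.range (m+1), |D k| :=
        Finset.abs_sum_le_sum_abs _ _
    _ ≤ ∑ k ∈ Finset.range (m+1), (2:ℝ)^(k^2-k) * ((2:ℝ)^((m+1)^2))⁻¹ :=
        Finset.sum_le_sum hbound
    _ = (∑ k ∈ Finset.range (m+1), (2:ℝ)^(k^2-k)) * ((2:ℝ)^((m+1)^2))⁻¹ := by
        rw [← Finset.sum_mul]
    _ ≤ 2^(m^2-m+1) * ((2:ℝ)^((m+1)^2))⁻¹ := by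
        apply mul_le_mul_of_nonneg_right hsum2 (by positivity)
    _ ≤ 8 * ((2:ℝ)⁻¹^(m+1))^3 := by
        have hexp : m^2-m+1 + (m+1)*3 = (m+1)^2 + 3 := by
          obtain ⟨M, hM⟩ : ∃ M, m^2 = M := ⟨_, rfl⟩
          have hsq : (m+1)^2 = M + 2*m + 1 := by rw [← hM]; ring
          have hmm : m ≤ M := hM ▸ Nat.le_self_pow two_ne_zero m
          rw [hsq, hM]; omega
        have hkey : (2:ℝ)^(m^2-m+1) * 2^((m+1)*3) = 2^((m+1)^2) * 8 := by
          rw [← pow_add, hexp, pow_add]; norm_num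
        have hcub : ((2:ℝ)⁻¹^(m+1))^3 = ((2:ℝ)^((m+1)*3))⁻¹ := by
          rw [← pow_mul, inv_pow]
        rw [hcub, ← div_eq_mul_inv, ← div_eq_mul_inv,
          div_le_div_iff₀ (by positivity) (by positivity)]
        nlinarith [hkey]

/-- `y` is an `M`-point of `f` (analytic form): there are `c ≥ 1` and `ε > 0` such that
`|f x − f y| ≤ c(|f x − f z| + |z − x|)` for all `x ∈ (y−ε, y)` and `z ∈ (y, y+ε)`. -/
def IsMPoint (f : ℝ → ℝ) (y : ℝ) : Prop :=
  ∃ c : ℝ, 1 ≤ c ∧ ∃ ε > 0, ∀ x ∈ Set.Ioo (y - ε) y, ∀ z ∈ Set.Ioo y (y + ε),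
    |f x - f y| ≤ c * (|f x - f z| + |z - x|)

set_option maxHeartbeats 1000000 in
/-- The function `f(y) = Σ_{k=0}^∞ 2^{−k}‖2^{k²}y‖`, where `‖t‖ = dist(t, ℤ)`, is
continuous, has no `M`-points, and consequently is nowhere differentiable. -/
theorem stmt_12 (f : ℝ → ℝ)
    (hf : ∀ y : ℝ, f y =
      ∑' k : ℕ, (2 : ℝ)⁻¹ ^ k * |(2 : ℝ) ^ (k ^ 2) * y - round ((2 : ℝ) ^ (k ^ 2) * y)|) :
    Continuous f ∧ (∀ y : ℝ, ¬ IsMPoint f y) ∧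
      ∀ y d : ℝ, ¬ HasDerivAt f d y := by
  have hfG : ∀ y : ℝ, f y = ∑' k : ℕ, (2:ℝ)⁻¹ ^ k * mpfG ((2:ℝ) ^ (k^2) * y) := by
    intro y; simp only [mpfG]; exact hf y
  have hlipG : LipschitzWith 1 mpfG := by
    apply LipschitzWith.of_dist_le_mul
    intro a b
    rw [Real.dist_eq, Real.dist_eq, NNReal.coe_one, one_mul]
    exact mpfG_lip a b
  have hcont : Continuous f := by
    rw [funext hfG]
    apply continuous_tsum (u := fun k : ℕ => (2:ℝ)⁻¹ ^ k)
    · intro k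
      exact continuous_const.mul (hlipG.continuous.comp (continuous_const.mul continuous_id))
    · exact summable_geometric_of_lt_one (by norm_num) (by norm_num)
    · intro k t
      rw [Real.norm_eq_abs, abs_mul, abs_of_nonneg (by positivity : (0:ℝ) ≤ (2:ℝ)⁻¹^k),
        abs_of_nonneg (mpfG_nonneg _)]
      have h1 := mpfG_le_half ((2:ℝ)^(k^2) * t)
      have h2 : (0:ℝ) ≤ (2:ℝ)⁻¹^k := by positivity
      nlinarith
  have hnoM : ∀ y : ℝ, ¬ IsMPoint f y := by
    intro y hM
    obtain ⟨c, hc, ε, hε, H⟩ := hM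
    obtain ⟨n₁, hn₁⟩ := pow_unbounded_of_one_lt (R := ℝ) (1/ε) one_lt_two
    obtain ⟨n₂, hn₂⟩ := pow_unbounded_of_one_lt (R := ℝ) (232*c) (by norm_num : (1:ℝ) < 4)
    set n := n₁ + n₂ + 3 with hnn
    have hn3 : 3 ≤ n := by omega
    set P : ℝ := (2:ℝ)⁻¹ ^ n with hPdef
    have hP : (0:ℝ) < P := by positivity
    have hnsq : n ≤ n^2 := Nat.le_self_pow two_ne_zero n
    have hεn : ((2:ℝ)^(n^2))⁻¹ < ε := by
      have h2 : (2:ℝ)^n₁ ≤ 2^(n^2) :=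
        pow_le_pow_right₀ one_le_two (le_trans (by omega) hnsq)
      have h3 : 1/ε < (2:ℝ)^(n^2) := lt_of_lt_of_le hn₁ h2
      have hT : (0:ℝ) < (2:ℝ)^(n^2) := by positivity
      have h4 : 1 < ε * (2:ℝ)^(n^2) := by
        rw [div_lt_iff₀ hε] at h3; linarith
      calc ((2:ℝ)^(n^2))⁻¹ = 1 / (2:ℝ)^(n^2) := (one_div _).symm
        _ < ε := by rw [div_lt_iff₀ hT]; linarith
    have hcn : 232*c < (4:ℝ)^n :=
      lt_of_lt_of_le hn₂ (pow_le_pow_right₀ (by norm_num) (by omega))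
    set u : ℝ := (2:ℝ)^(n^2) * y with hu
    set N : ℕ := 2^(2*n) with hNdef
    have hN1 : 1 ≤ N := Nat.one_le_two_pow
    have hNr : ((N:ℕ):ℝ) = (2:ℝ)^(2*n) := by rw [hNdef]; push_cast; rfl
    obtain ⟨w, hww, hwfar⟩ : ∃ w : ℝ, (w = 0 ∨ w = 1/2) ∧ 1/8 ≤ |mpfG u - w| := by
      rcases le_or_gt (1/8) (mpfG u) with h | h
      · exact ⟨0, Or.inl rfl, by rwa [sub_zero, abs_of_nonneg (mpfG_nonneg u)]⟩
      · refine ⟨1/2, Or.inr rfl, ?_⟩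
        have := mpfG_le_half u
        rw [abs_of_nonpos (by linarith)]; linarith
    obtain ⟨j, hj1, hjN, hjg⟩ := mpf_exists_near u w hww hN1
    obtain ⟨i, hi1, hiN, hig⟩ := mpf_exists_near' u w hww hN1
    set T : ℝ := ((2:ℝ)^(n^2+2*n))⁻¹ with hTdef
    have hTpos : 0 < T := by positivity
    have h2n0 : ((2:ℝ)^(2*n)) ≠ 0 := by positivity
    have hn20 : ((2:ℝ)^(n^2)) ≠ 0 := by positivity
    have hscale : (2:ℝ)^(n^2) * T = ((2:ℝ)^(2*n))⁻¹ := by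
      rw [hTdef, pow_add, mul_inv, ← mul_assoc, mul_inv_cancel₀ hn20, one_mul]
    have hNT : (N:ℝ) * T = ((2:ℝ)^(n^2))⁻¹ := by
      rw [hNr, hTdef, pow_add]
      field_simp
    -- bounds on the shifts
    have hj0 : (1:ℝ) ≤ (j:ℝ) := by exact_mod_cast hj1
    have hi0 : (1:ℝ) ≤ (i:ℝ) := by exact_mod_cast hi1
    have hjNr : (j:ℝ) ≤ (N:ℝ) := by exact_mod_cast hjN
    have hiNr : (i:ℝ) ≤ (N:ℝ) := by exact_mod_cast hiN
    have hjT : (j:ℝ)*T ≤ ((2:ℝ)^(n^2))⁻¹ := by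
      rw [← hNT]; exact mul_le_mul_of_nonneg_right hjNr hTpos.le
    have hiT : (i:ℝ)*T ≤ ((2:ℝ)^(n^2))⁻¹ := by
      rw [← hNT]; exact mul_le_mul_of_nonneg_right hiNr hTpos.le
    have hjTpos : 0 < (j:ℝ)*T := mul_pos (by linarith) hTpos
    have hiTpos : 0 < (i:ℝ)*T := mul_pos (by linarith) hTpos
    set x : ℝ := y - (j:ℝ)*T with hxdef
    set z : ℝ := y + (i:ℝ)*T with hzdef
    have hxmem : x ∈ Set.Ioo (y - ε) y := by
      constructor
      · rw [hxdef]; linarith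
      · rw [hxdef]; linarith
    have hzmem : z ∈ Set.Ioo y (y + ε) := by
      constructor
      · rw [hzdef]; linarith
      · rw [hzdef]; linarith
    -- divisibility
    have hdvd : ∀ (q : ℕ) (k : ℕ), n < k → ∃ m : ℤ, (2:ℝ)^(k^2) * ((q:ℝ)*T) = m := by
      intro q k hk
      have hle : n^2+2*n ≤ k^2 := by
        calc n^2+2*n ≤ (n+1)^2 := by nlinarith
          _ ≤ k^2 := Nat.pow_le_pow_left (by omega) 2
      refine ⟨((q * 2^(k^2-(n^2+2*n)) : ℕ) : ℤ), ?_⟩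
      push_cast
      rw [pow_sub₀ (2:ℝ) two_ne_zero hle, hTdef]
      ring
    -- key estimates
    have hxs : x = y + (-(((j:ℝ))*T)) := by rw [hxdef]; ring
    have hzs : z = y + ((i:ℝ)*T) := by rw [hzdef]
    have Ax : |f x - f y - P * (mpfG ((2:ℝ)^(n^2) * x) - mpfG u)| ≤ 8 * P^3 := by
      have hs : |(-(((j:ℝ))*T))| ≤ ((2:ℝ)^(n^2))⁻¹ := by
        rw [abs_neg, abs_of_pos hjTpos]; exact hjT
      have hd : ∀ k, n < k → ∃ m : ℤ, (2:ℝ)^(k^2) * (-(((j:ℝ))*T)) = m := by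
        intro k hk
        obtain ⟨m, hm⟩ := hdvd j k hk
        exact ⟨-m, by push_cast; rw [show (2:ℝ)^(k^2) * (-(((j:ℝ))*T)) = -((2:ℝ)^(k^2) * ((j:ℝ)*T)) by ring, hm]⟩
      have := mpf_key y (-(((j:ℝ))*T)) n (by omega) hs hd
      rw [← hxs] at this
      rw [hfG x, hfG y, hu]
      exact this
    have Az : |f z - f y - P * (mpfG ((2:ℝ)^(n^2) * z) - mpfG u)| ≤ 8 * P^3 := by
      have hs : |((i:ℝ)*T)| ≤ ((2:ℝ)^(n^2))⁻¹ := by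
        rw [abs_of_pos hiTpos]; exact hiT
      have := mpf_key y ((i:ℝ)*T) n (by omega) hs (hdvd i)
      rw [← hzs] at this
      rw [hfG z, hfG y, hu]
      exact this
    -- identify the main-term arguments
    have hux : (2:ℝ)^(n^2) * x = u - (j:ℝ) / (N:ℝ) := by
      rw [hxdef, hu, hNr, div_eq_mul_inv, ← hscale]; ring
    have huz : (2:ℝ)^(n^2) * z = u + (i:ℝ) / (N:ℝ) := by
      rw [hzdef, hu, hNr, div_eq_mul_inv, ← hscale]; ring
    rw [hux] at Ax
    rw [huz] at Az
    -- abbreviations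
    set gu : ℝ := mpfG u
    set gx : ℝ := mpfG (u - (j:ℝ) / (N:ℝ))
    set gz : ℝ := mpfG (u + (i:ℝ) / (N:ℝ))
    have hNP : 1/(N:ℝ) = P^2 := by
      rw [hNr, hPdef, one_div, ← inv_pow, ← pow_mul, mul_comm n 2]
    rw [hNP] at hjg hig
    -- (2^(n^2))⁻¹ ≤ P^3
    have h3n : 3*n ≤ n^2 := by
      calc 3*n ≤ n*n := Nat.mul_le_mul_right n hn3
        _ = n^2 := (sq n).symm
    have hn2P : ((2:ℝ)^(n^2))⁻¹ ≤ P^3 := by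
      have h1 : (2:ℝ)^(3*n) ≤ 2^(n^2) := pow_le_pow_right₀ one_le_two h3n
      have h2 : P^3 = ((2:ℝ)^(3*n))⁻¹ := by
        rw [hPdef, ← pow_mul, mul_comm n 3, inv_pow]
      rw [h2]
      exact inv_anti₀ (by positivity) h1
    -- lower bound on |f x - f y|
    have egx : 1/8 - P^2 ≤ |gx - gu| := by
      have t1 : |gu - w| ≤ |gu - gx| + |gx - w| := abs_sub_le gu gx w
      have t2 : |gu - gx| = |gx - gu| := abs_sub_comm _ _
      linarith
    have hlow : P*(1/8) - P^3 - 8*P^3 ≤ |f x - f y| := by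
      have t1 : |P*(gx - gu)| - |f x - f y| ≤ |P*(gx-gu) - (f x - f y)| :=
        abs_sub_abs_le_abs_sub _ _
      have t2 : |P*(gx-gu) - (f x - f y)| = |f x - f y - P*(gx - gu)| := abs_sub_comm _ _
      have t3 : |P*(gx - gu)| = P * |gx - gu| := by
        rw [abs_mul, abs_of_pos hP]
      have t4 : P*(1/8 - P^2) ≤ P * |gx - gu| := mul_le_mul_of_nonneg_left egx hP.le
      linarith
    -- upper bound on |f x - f z|
    have hmid : |f x - f z| ≤ 18*P^3 := by
      have e0 : f x - f z = (f x - f y) - (f z - f y) := by ring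
      have t1 : |(f x - f y) - (f z - f y)| ≤
          |(f x - f y) - P*(gx - gu)| + |P*(gx-gu) - (f z - f y)| :=
        abs_sub_le _ _ _
      have t2 : |P*(gx-gu) - (f z - f y)| ≤
          |P*(gx-gu) - P*(gz-gu)| + |P*(gz-gu) - (f z - f y)| := abs_sub_le _ _ _
      have t3 : |P*(gz-gu) - (f z - f y)| = |f z - f y - P*(gz-gu)| := abs_sub_comm _ _
      have t4 : |P*(gx-gu) - P*(gz-gu)| = P * |gx - gz| := by
        rw [show P*(gx-gu) - P*(gz-gu) = P * (gx - gz) by ring, abs_mul, abs_of_pos hP]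
      have t5 : |gx - gz| ≤ |gx - w| + |w - gz| := abs_sub_le _ _ _
      have t6 : |w - gz| = |gz - w| := abs_sub_comm _ _
      have t7 : P * |gx - gz| ≤ P * (2*P^2) := by
        apply mul_le_mul_of_nonneg_left _ hP.le
        linarith
      rw [e0]
      linarith
    -- bound on |z - x|
    have hzx : |z - x| ≤ 2*P^3 := by
      have e0 : z - x = (i:ℝ)*T + (j:ℝ)*T := by rw [hzdef, hxdef]; ring
      have e1 : 0 < z - x := by rw [e0]; linarith
      rw [abs_of_pos e1, e0]
      linarith [hjT, hiT, hn2P]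
    -- combine
    have hH := H x hxmem z hzmem
    have hcpos : (0:ℝ) < c := by linarith
    have hchain : P*(1/8) - P^3 - 8*P^3 ≤ c * (18*P^3 + 2*P^3) := by
      calc P*(1/8) - P^3 - 8*P^3 ≤ |f x - f y| := hlow
        _ ≤ c * (|f x - f z| + |z - x|) := hH
        _ ≤ c * (18*P^3 + 2*P^3) := by
            apply mul_le_mul_of_nonneg_left _ hcpos.le
            linarith
    have h9 : 9*P^3 ≤ 9*c*P^3 := by
      have := mul_le_mul_of_nonneg_right hc (le_of_lt (pow_pos hP 3))
      linarith
    have h10 : P * 1 ≤ P * (232*c*P^2) := by linarith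
    have h11 : 1 ≤ 232*c*P^2 := le_of_mul_le_mul_left h10 hP
    have hP4 : P^2 * (4:ℝ)^n = 1 := by
      rw [hPdef, ← pow_mul, mul_comm n 2, pow_mul, ← mul_pow]
      norm_num
    have h12 : 232*c*P^2 < (4:ℝ)^n * P^2 := by
      have := mul_lt_mul_of_pos_right hcn (by positivity : (0:ℝ) < P^2)
      linarith
    linarith [h11, h12, hP4]
  refine ⟨hcont, hnoM, ?_⟩
  intro y d hd
  apply hnoM y
  have h1 := (hasDerivAt_iff_isLittleO.mp hd).def one_pos
  rw [Metric.eventually_nhds_iff] at h1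
  obtain ⟨ε, hε, h2⟩ := h1
  refine ⟨|d| + 1, by linarith [abs_nonneg d], ε, hε, ?_⟩
  intro x hx z hz
  obtain ⟨hx1, hx2⟩ := hx
  obtain ⟨hz1, hz2⟩ := hz
  have hdx : dist x y < ε := by
    rw [Real.dist_eq, abs_of_neg (by linarith : x - y < 0)]
    linarith
  have h3 := h2 hdx
  simp only [Real.norm_eq_abs, smul_eq_mul, one_mul] at h3
  have h4 : |f x - f y| ≤ (|d| + 1) * |x - y| := by
    have e0 : f x - f y = (f x - f y - (x-y)*d) + (x-y)*d := by ring
    calc |f x - f y| = |(f x - f y - (x-y)*d) + (x-y)*d| := by rw [← e0]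
      _ ≤ |f x - f y - (x-y)*d| + |(x-y)*d| := abs_add_le _ _
      _ ≤ |x - y| + (|x - y|) * (|d|) := by rw [abs_mul]; linarith
      _ = (|d|+1)*|x-y| := by ring
  have h5 : |x - y| ≤ |z - x| := by
    rw [abs_of_neg (by linarith : x - y < 0), abs_of_pos (by linarith : 0 < z - x)]
    linarith
  have hd1 : (0:ℝ) < |d| + 1 := by linarith [abs_nonneg d]
  calc |f x - f y| ≤ (|d|+1)*|x-y| := h4
    _ ≤ (|d|+1)*|z - x| := mul_le_mul_of_nonneg_left h5 hd1.le
    _ ≤ (|d|+1)*(|f x - f z| + |z - x|) := by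
        apply mul_le_mul_of_nonneg_left _ hd1.le
        linarith [abs_nonneg (f x - f z)]
end

section
/- Let f : I → ℝ be continuous and y ∈ I, and suppose there is ε > 0 such that |ψ(x) − ψ(y)| ≤ |ψ(x) − ψ(z)| for all x ∈ (y−ε, y) ∩ I, z ∈ (y, y+ε) ∩ I (i.e., y is an M₁-point with witness ε). If there is x ∈ (y−ε, y) with f(x) > f(y), then the upper right Dini derivative of f at y satisfies D⁺f(y) ≤ (y − x)/(f(x) − f(y)). -/
open Filter

/-- The natural parametrization of the graph of `f`, as a map into the Euclidean plane. -/
noncomputable def graphMap (f : ℝ → ℝ) (t : ℝ) : EuclideanSpace ℝ (Fin 2) := WithLp.toLp 2 ![t, f t]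

/-- Upper right Dini derivative of `f` at `y`, relative to `I`, with values in `EReal`. -/
noncomputable def diniSupR (f : ℝ → ℝ) (I : Set ℝ) (y : ℝ) : EReal :=
  limsup (fun t => (((f t - f y) / (t - y) : ℝ) : EReal)) (nhdsWithin y (Set.Ioi y ∩ I))

lemma graphMap_normsq (f : ℝ → ℝ) (u v : ℝ) :
    ‖graphMap f u - graphMap f v‖^2 = (u-v)^2 + (f u - f v)^2 := by
  simp [graphMap, EuclideanSpace.norm_eq, Fin.sum_univ_two]
  rw [Real.sq_sqrt (by positivity)]

/-- If `y ∈ I` is an `M₁`-point of the continuous function `f` with witness `ε`, and there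
is `x ∈ (y−ε, y) ∩ I` with `f x > f y`, then `D⁺f(y) ≤ (y − x)/(f x − f y)`. -/
theorem stmt_13 (I : Set ℝ) (hI : I.OrdConnected) (f : ℝ → ℝ) (hf : ContinuousOn f I)
    (y : ℝ) (hy : y ∈ I) (ε : ℝ) (hε : 0 < ε)
    (hM : ∀ x ∈ Set.Ioo (y - ε) y ∩ I, ∀ z ∈ Set.Ioo y (y + ε) ∩ I,
      ‖graphMap f x - graphMap f y‖ ≤ ‖graphMap f x - graphMap f z‖)
    (x : ℝ) (hx : x ∈ Set.Ioo (y - ε) y ∩ I) (hfx : f y < f x) :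
    diniSupR f I y ≤ (((y - x) / (f x - f y) : ℝ) : EReal) := by
  set l := nhdsWithin y (Set.Ioi y ∩ I) with hl
  rcases eq_or_neBot l with hbot | hne
  · rw [diniSupR, ← hl, hbot, limsup_bot]
    exact bot_le
  obtain ⟨hx1, hxI⟩ := hx
  have hApos : 0 < f x - f y := sub_pos.mpr hfx
  have hly : Tendsto (fun z : ℝ => z) l (nhds y) :=
    tendsto_id.mono_left nhdsWithin_le_nhds
  have hlf : Tendsto f l (nhds (f y)) := by
    have hle : l ≤ nhdsWithin y I := nhdsWithin_mono y Set.inter_subset_right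
    exact (hf y hy).mono_left hle
  have hg : Tendsto (fun z => f z - f y) l (nhds 0) := by
    simpa using hlf.sub (tendsto_const_nhds (x := f y))
  have hh : Tendsto (fun z : ℝ => z - y) l (nhds 0) := by
    simpa using hly.sub (tendsto_const_nhds (x := y))
  set bound : ℝ → ℝ := fun z => ((z - y) - 2*(x - y))/(2*(f x - f y) - (f z - f y))
    with hbdef
  have hbound : Tendsto bound l (nhds ((y - x)/(f x - f y))) := by
    have h1 : Tendsto (fun z : ℝ => (z - y) - 2*(x-y)) l (nhds (0 - 2*(x-y))) :=
      hh.sub tendsto_const_nhds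
    have h2 : Tendsto (fun z : ℝ => 2*(f x - f y) - (f z - f y)) l
        (nhds (2*(f x - f y) - 0)) := tendsto_const_nhds.sub hg
    have h3 := h1.div h2 (by intro h; nlinarith)
    have heq : (0 - 2*(x-y))/(2*(f x - f y) - 0) = (y - x)/(f x - f y) := by
      rw [sub_zero]
      field_simp
      ring
    rwa [heq] at h3
  have hev : ∀ᶠ z in l, (f z - f y)/(z - y) ≤ bound z := by
    have h1 : ∀ᶠ z in l, z ∈ Set.Ioi y ∩ I := self_mem_nhdsWithin
    have h2 : ∀ᶠ z in l, z < y + ε := by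
      have hmem : Set.Iio (y+ε) ∈ nhds y := Iio_mem_nhds (by linarith)
      exact eventually_nhdsWithin_of_eventually_nhds
        (eventually_of_mem hmem fun z hz => hz)
    have h3 : ∀ᶠ z in l, f z - f y < f x - f y := by
      have hmem : Set.Iio (f x - f y) ∈ nhds (0:ℝ) := Iio_mem_nhds hApos
      exact hg.eventually (eventually_of_mem hmem fun t ht => ht)
    filter_upwards [h1, h2, h3] with z hz1 hz2 hz3
    have hzy : y < z := hz1.1
    have hnorm := hM x ⟨hx1, hxI⟩ z ⟨⟨hzy, hz2⟩, hz1.2⟩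
    have key : (x - y)^2 + (f x - f y)^2 ≤ (x - z)^2 + (f x - f z)^2 := by
      have hsq : ‖graphMap f x - graphMap f y‖^2 ≤ ‖graphMap f x - graphMap f z‖^2 := by
        exact pow_le_pow_left₀ (norm_nonneg _) hnorm 2
      rwa [graphMap_normsq, graphMap_normsq] at hsq
    have hden : (0:ℝ) < 2*(f x - f y) - (f z - f y) := by linarith
    rw [hbdef]
    rw [div_le_div_iff₀ (by linarith) hden]
    nlinarith [key]
  have hmain : limsup (fun z => ((bound z : ℝ) : EReal)) l
      = (((y - x)/(f x - f y) : ℝ) : EReal) := by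
    have ht : Tendsto (fun z => ((bound z : ℝ) : EReal)) l
        (nhds (((y - x)/(f x - f y) : ℝ) : EReal)) :=
      (continuous_coe_real_ereal.tendsto _).comp hbound
    exact ht.limsup_eq
  calc diniSupR f I y
      ≤ limsup (fun z => ((bound z : ℝ) : EReal)) l := by
        exact limsup_le_limsup (hev.mono fun z hz => EReal.coe_le_coe_iff.mpr hz)
    _ = (((y - x)/(f x - f y) : ℝ) : EReal) := hmain
end

section
/- Let f : I → ℝ be continuous and y ∈ I an M₁-point of f. If the lower left Dini derivative D₋f(y) is negative, then the upper right Dini derivative satisfies D⁺f(y) ≤ 1/|D₋f(y)|. -/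
open Filter

/-- Lower left Dini derivative of `f` at `y`, relative to `I`, with values in `EReal`. -/
noncomputable def diniInfL (f : ℝ → ℝ) (I : Set ℝ) (y : ℝ) : EReal :=
  liminf (fun t => (((f t - f y) / (t - y) : ℝ) : EReal)) (nhdsWithin y (Set.Iio y ∩ I))

/-- `y` is an `M₁`-point of `f` (relative to `I`). -/
def IsM1Point (f : ℝ → ℝ) (I : Set ℝ) (y : ℝ) : Prop :=
  ∃ ε > 0, ∀ x ∈ Set.Ioo (y - ε) y ∩ I, ∀ z ∈ Set.Ioo y (y + ε) ∩ I,
    ‖graphMap f x - graphMap f y‖ ≤ ‖graphMap f x - graphMap f z‖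

lemma norm_graphMap_sub_sq (f : ℝ → ℝ) (p q : ℝ) :
    ‖graphMap f p - graphMap f q‖ ^ 2 = (p - q) ^ 2 + (f p - f q) ^ 2 := by
  have h : graphMap f p - graphMap f q = WithLp.toLp 2 ![p - q, f p - f q] := by
    ext i
    fin_cases i <;> simp [graphMap]
  rw [h, EuclideanSpace.norm_eq, Real.sq_sqrt (by positivity)]
  simp [Fin.sum_univ_two, sq_abs]

set_option maxHeartbeats 1600000 in
/-- If `y ∈ I` is an `M₁`-point of the continuous function `f` and the lower left Dini
derivative `D₋f(y)` is negative, then `D⁺f(y) ≤ 1/|D₋f(y)|`.  (The bound is expressed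
equivalently as: for every real `r < 0` with `D₋f(y) ≤ r` one has `D⁺f(y) ≤ 1/(−r)`,
which also covers the case `D₋f(y) = −∞`.) -/
theorem stmt_14 (I : Set ℝ) (hI : I.OrdConnected) (f : ℝ → ℝ) (hf : ContinuousOn f I)
    (y : ℝ) (hy : y ∈ I) (hM : IsM1Point f I y) (hneg : diniInfL f I y < 0) :
    ∀ r : ℝ, r < 0 → diniInfL f I y ≤ (r : EReal) →
      diniSupR f I y ≤ ((1 / (-r) : ℝ) : EReal) := by
  intro r hr hle
  by_contra hcon
  push_neg at hcon
  obtain ⟨ε, hε, hM⟩ := hM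
  -- pick s real with 1/(-r) < s < limsup
  obtain ⟨s, hs1, hs2⟩ := EReal.exists_between_coe_real hcon
  have hs1' : 1 / (-r) < s := by exact_mod_cast hs1
  have hrpos : 0 < -r := by linarith
  have hspos : 0 < s := lt_trans (by positivity) hs1'
  -- frequently on the right, slope > s
  have hfreqR : ∃ᶠ z in nhdsWithin y (Set.Ioi y ∩ I), s < (f z - f y) / (z - y) := by
    by_contra h
    simp only [not_frequently, not_lt] at h
    have : diniSupR f I y ≤ (s : EReal) := by
      apply limsup_le_of_le isCobounded_le_of_bot
      filter_upwards [h] with z hz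
      exact_mod_cast hz
    exact absurd (lt_of_lt_of_le hs2 this) (lt_irrefl _)
  -- choose r' with r < r' < -(1/s)
  have h1s : 1 / s < -r := by
    rw [div_lt_iff₀ hspos]
    have := (div_lt_iff₀ hrpos).mp hs1'
    linarith
  set r' : ℝ := (r + (-(1 / s))) / 2 with hr'def
  have h1spos : 0 < 1 / s := by positivity
  have hrr' : r < r' := by rw [hr'def]; linarith
  have h1r' : 1 / s < -r' := by rw [hr'def]; linarith
  have hr'neg : r' < 0 := by linarith
  -- frequently on the left, slope < r'
  have hfreqL : ∃ᶠ x in nhdsWithin y (Set.Iio y ∩ I), (f x - f y) / (x - y) < r' := by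
    by_contra h
    simp only [not_frequently, not_lt] at h
    have : (r' : EReal) ≤ diniInfL f I y := by
      apply le_liminf_of_le isCobounded_ge_of_top
      filter_upwards [h] with x hx
      exact_mod_cast hx
    have := lt_of_le_of_lt (this.trans hle) (by exact_mod_cast hrr' : (r : EReal) < (r' : EReal))
    exact absurd this (lt_irrefl _)
  -- eventually on the left: in the ε-window
  have hevL : ∀ᶠ x in nhdsWithin y (Set.Iio y ∩ I), x ∈ Set.Ioo (y - ε) y ∩ I := by
    have h1 : ∀ᶠ x in nhdsWithin y (Set.Iio y ∩ I), x ∈ Set.Iio y ∩ I := self_mem_nhdsWithin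
    have h2 : ∀ᶠ x in nhdsWithin y (Set.Iio y ∩ I), y - ε < x :=
      eventually_nhdsWithin_of_eventually_nhds (eventually_gt_nhds (by linarith))
    filter_upwards [h1, h2] with x hx1 hx2
    exact ⟨⟨hx2, hx1.1⟩, hx1.2⟩
  obtain ⟨x, hxs, hxm⟩ := (hfreqL.and_eventually hevL).exists
  set a : ℝ := y - x with hadef
  set u : ℝ := f x - f y with hudef
  have hapos : 0 < a := by simp [hadef]; exact hxm.1.2
  have hxy : x - y < 0 := by linarith
  have hu : -r' * a < u := by
    have := hxs
    rw [div_lt_iff_of_neg hxy] at this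
    calc -r' * a = r' * (x - y) := by ring
    _ < u := this
  have hupos : 0 < u := lt_trans (mul_pos (by linarith) hapos) hu
  have hsu : a < s * u := by
    have : (1/s) * a < -r' * a := mul_lt_mul_of_pos_right h1r' hapos
    have h2 : (1/s) * a < u := lt_trans this hu
    calc a = s * ((1/s) * a) := by field_simp
    _ < s * u := by exact mul_lt_mul_of_pos_left h2 hspos
  -- choose δ
  set δ : ℝ := min u ((s * u - a) / (1 + s)) with hδdef
  have hδpos : 0 < δ := by
    apply lt_min hupos
    apply div_pos (by linarith) (by linarith)
  have hδu : δ ≤ u := min_le_left _ _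
  have hδkey : δ * (1 + s) ≤ s * u - a := by
    have h := min_le_right u ((s * u - a) / (1 + s))
    rw [← le_div_iff₀ (by linarith : (0:ℝ) < 1 + s)]
    exact h
  -- eventually on the right: window + continuity
  have hmono : nhdsWithin y (Set.Ioi y ∩ I) ≤ nhdsWithin y I :=
    nhdsWithin_mono _ Set.inter_subset_right
  have hcont : Filter.Tendsto f (nhdsWithin y (Set.Ioi y ∩ I)) (nhds (f y)) :=
    (hf.continuousWithinAt hy).mono_left hmono
  have hevR : ∀ᶠ z in nhdsWithin y (Set.Ioi y ∩ I),
      z ∈ Set.Ioo y (y + ε) ∩ I ∧ z - y < δ ∧ |f z - f y| < δ := by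
    have h1 : ∀ᶠ z in nhdsWithin y (Set.Ioi y ∩ I), z ∈ Set.Ioi y ∩ I := self_mem_nhdsWithin
    have h2 : ∀ᶠ z in nhdsWithin y (Set.Ioi y ∩ I), z < y + min ε δ :=
      eventually_nhdsWithin_of_eventually_nhds (eventually_lt_nhds (by simp [hε, hδpos]))
    have h3 : ∀ᶠ z in nhdsWithin y (Set.Ioi y ∩ I), |f z - f y| < δ := by
      have := Metric.tendsto_nhds.mp hcont δ hδpos
      filter_upwards [this] with z hz
      rwa [Real.dist_eq] at hz
    filter_upwards [h1, h2, h3] with z hz1 hz2 hz3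
    refine ⟨⟨⟨hz1.1, lt_of_lt_of_le hz2 (by simp)⟩, hz1.2⟩, ?_, hz3⟩
    have : z < y + δ := lt_of_lt_of_le hz2 (by simp)
    linarith
  obtain ⟨z, hzs, hzm, hzb, hzf⟩ := (hfreqR.and_eventually hevR).exists
  set b : ℝ := z - y with hbdef
  set v : ℝ := f z - f y with hvdef
  have hbpos : 0 < b := by simp [hbdef]; exact hzm.1.1
  have hvb : s * b < v := by
    rw [lt_div_iff₀ hbpos] at hzs
    linarith [hzs]
  have hvpos : 0 < v := lt_trans (mul_pos hspos hbpos) hvb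
  have hvδ : v < δ := lt_of_le_of_lt (le_abs_self _) hzf
  -- M1 inequality
  have hM1 := hM x hxm z hzm
  have hM1sq : ‖graphMap f x - graphMap f y‖ ^ 2 ≤ ‖graphMap f x - graphMap f z‖ ^ 2 :=
    pow_le_pow_left₀ (norm_nonneg _) hM1 2
  rw [norm_graphMap_sub_sq, norm_graphMap_sub_sq] at hM1sq
  -- translate: a² + u² ≤ (a+b)² + (u−v)²  ⇒ v(2u−v) ≤ b(2a+b)
  have hkey : v * (2 * u - v) ≤ b * (2 * a + b) := by
    have h1 : x - y = -a := by rw [hadef]; ring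
    have h2 : x - z = -(a + b) := by rw [hadef, hbdef]; ring
    have h3 : f x - f z = u - v := by rw [hudef, hvdef]; ring
    rw [h1, h2, h3] at hM1sq
    nlinarith [hM1sq]
  -- derive contradiction
  have h2uv : u < 2 * u - v := by linarith
  have hstep : s * b * (2 * u - v) < v * (2 * u - v) :=
    mul_lt_mul_of_pos_right hvb (by linarith)
  have h' : b * (s * (2 * u - v)) ≤ b * (2 * a + b) := by
    have h := le_trans hstep.le hkey
    ring_nf at h ⊢
    linarith
  have hdiv : s * (2 * u - v) ≤ 2 * a + b := le_of_mul_le_mul_left h' hbpos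
  nlinarith [mul_lt_mul_of_pos_left hvδ hspos, hδkey, hdiv, hzb, hsu, hδpos, hspos]
end
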